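/- Let K be a field and R = K[s, a_1, a_2, b_1, c_1, t]. The join-meet ideal of the lattice L₃(2,1,1), generated by {a_1 b_1 − st, a_1 c_1 − st, a_2 b_1 − st, a_2 c_1 − st, b_1 c_1 − st}, is a radical ideal. -/

import Mathlib

open MvPolynomial

/-- The variables of `K[s, a_1, a_2, b_1, c_1, t]`. -/
inductive V16 : Type where
  | s | a1 | a2 | b1 | c1 | t
deriving DecidableEq

namespace L3Aux

variable (K : Type*) [Field K]

/-- Substituting each variable `v` by `g v` changes a polynomial by an element of any ideal
containing all `X v - g v`. -/
private lemma sub_aeval_mem (J : Ideal (MvPolynomial V16 K))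
    (g : V16 → MvPolynomial V16 K) (hg : ∀ v, X v - g v ∈ J) (f : MvPolynomial V16 K) :
    f - aeval g f ∈ J := by
  induction f using MvPolynomial.induction_on with
  | C a => simpa using J.zero_mem
  | add p q hp hq =>
      rw [map_add]
      have h := J.add_mem hp hq
      have : p + q - (aeval g p + aeval g q) = p - aeval g p + (q - aeval g q) := by ring
      rw [this]; exact h
  | mul_X p v hp =>
      rw [map_mul, aeval_X]
      have h1 : p * X v - aeval g p * g v
          = (p - aeval g p) * g v + p * (X v - g v) := by ring
      rw [h1]
      exact J.add_mem (J.mul_mem_right _ hp) (J.mul_mem_left _ (hg v))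

/-- An ideal generated by variables is prime. -/
private lemma spanX_isPrime (s : Set V16) :
    (Ideal.span (X '' s : Set (MvPolynomial V16 K))).IsPrime := by
  classical
  have key : Ideal.span (X '' s : Set (MvPolynomial V16 K)) =
      RingHom.ker ((aeval (fun v => if v ∈ s then 0 else X v) :
        MvPolynomial V16 K →ₐ[K] MvPolynomial V16 K)) := by
    apply le_antisymm
    · rw [Ideal.span_le]
      rintro x ⟨v, hv, rfl⟩
      simp [RingHom.mem_ker, hv]
    · intro f hf
      have h0 : aeval (fun v => if v ∈ s then 0 else X v) f = 0 := hf
      have h1 : f - aeval (fun v => if v ∈ s then 0 else X v) f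
          ∈ Ideal.span (X '' s : Set (MvPolynomial V16 K)) := by
        refine sub_aeval_mem K _ _ (fun v => ?_) f
        by_cases h : v ∈ s
        · have hXv : (X v : MvPolynomial V16 K) ∈ X '' s := ⟨v, h, rfl⟩
          simpa [h] using Ideal.subset_span hXv
        · simp [h]
      rw [h0, sub_zero] at h1; exact h1
  rw [key]
  exact RingHom.ker_isPrime _

/-! ### The quadric cone prime `P7` -/

private noncomputable def qq : MvPolynomial V16 K :=
  X V16.a1 * X V16.a1 - X V16.s * X V16.t

private noncomputable def P7 : Ideal (MvPolynomial V16 K) :=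
  Ideal.span {X V16.a1 - X V16.a2, X V16.a1 - X V16.b1, X V16.a1 - X V16.c1, qq K}

private noncomputable def φfun : V16 → MvPolynomial (Fin 2) K
  | V16.s => X 0 ^ 2
  | V16.t => X 1 ^ 2
  | V16.a1 => X 0 * X 1
  | V16.a2 => X 0 * X 1
  | V16.b1 => X 0 * X 1
  | V16.c1 => X 0 * X 1

private noncomputable def φ7 : MvPolynomial V16 K →ₐ[K] MvPolynomial (Fin 2) K :=
  aeval (φfun K)

private noncomputable def sgfun : V16 → MvPolynomial V16 K
  | V16.s => X V16.s
  | V16.t => X V16.t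
  | V16.a1 => X V16.a1
  | V16.a2 => X V16.a1
  | V16.b1 => X V16.a1
  | V16.c1 => X V16.a1

private noncomputable def sg : MvPolynomial V16 K →ₐ[K] MvPolynomial V16 K :=
  aeval (sgfun K)

private noncomputable def ι : MvPolynomial (Fin 2) K →ₐ[K] MvPolynomial V16 K :=
  aeval (fun i => if i = 0 then X V16.s else X V16.t)

private lemma ι_X0 : ι K (X 0) = X V16.s := by simp [ι]
private lemma ι_X1 : ι K (X 1) = X V16.t := by simp [ι]

/-- Division by `a1^2 - s t` on the image of `sg`. -/
private lemma div_lemma (f : MvPolynomial V16 K) :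
    ∃ A B : MvPolynomial (Fin 2) K,
      sg K f - (ι K A + ι K B * X V16.a1) ∈ Ideal.span {qq K} := by
  induction f using MvPolynomial.induction_on with
  | C a =>
      refine ⟨C a, 0, ?_⟩
      have h1 : sg K (C a) = C a := by simp [sg, MvPolynomial.algebraMap_eq]
      have h2 : ι K (C a) = C a := by simp [ι, MvPolynomial.algebraMap_eq]
      rw [h1, h2]
      simpa using (Ideal.span {qq K}).zero_mem
  | add p q hp hq =>
      obtain ⟨A1, B1, h1⟩ := hp
      obtain ⟨A2, B2, h2⟩ := hq
      refine ⟨A1 + A2, B1 + B2, ?_⟩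
      have h := (Ideal.span {qq K}).add_mem h1 h2
      have heq : sg K p - (ι K A1 + ι K B1 * X V16.a1)
            + (sg K q - (ι K A2 + ι K B2 * X V16.a1))
          = sg K (p + q) - (ι K (A1 + A2) + ι K (B1 + B2) * X V16.a1) := by
        simp only [map_add]; ring
      rw [← heq]; exact h
  | mul_X p v hp =>
      obtain ⟨A, B, h⟩ := hp
      have hmul : sg K (p * X v) = sg K p * sg K (X v) := map_mul _ _ _
      cases v with
      | s =>
          refine ⟨A * X 0, B * X 0, ?_⟩
          have heq : sg K (p * X V16.s) - (ι K (A * X 0) + ι K (B * X 0) * X V16.a1)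
              = (sg K p - (ι K A + ι K B * X V16.a1)) * X V16.s := by
            rw [hmul]
            simp only [map_mul, ι_X0, sg, aeval_X, sgfun]
            ring
          rw [heq]; exact Ideal.mul_mem_right _ _ h
      | t =>
          refine ⟨A * X 1, B * X 1, ?_⟩
          have heq : sg K (p * X V16.t) - (ι K (A * X 1) + ι K (B * X 1) * X V16.a1)
              = (sg K p - (ι K A + ι K B * X V16.a1)) * X V16.t := by
            rw [hmul]
            simp only [map_mul, ι_X1, sg, aeval_X, sgfun]
            ring
          rw [heq]; exact Ideal.mul_mem_right _ _ h
      | a1 =>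
          refine ⟨B * (X 0 * X 1), A, ?_⟩
          have heq : sg K (p * X V16.a1) - (ι K (B * (X 0 * X 1)) + ι K A * X V16.a1)
              = (sg K p - (ι K A + ι K B * X V16.a1)) * X V16.a1 + ι K B * qq K := by
            rw [hmul]
            simp only [map_mul, ι_X0, ι_X1, sg, aeval_X, sgfun, qq]
            ring
          rw [heq]
          exact Ideal.add_mem _ (Ideal.mul_mem_right _ _ h)
            (Ideal.mul_mem_left _ _ (Ideal.subset_span rfl))
      | a2 =>
          refine ⟨B * (X 0 * X 1), A, ?_⟩
          have heq : sg K (p * X V16.a2) - (ι K (B * (X 0 * X 1)) + ι K A * X V16.a1)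
              = (sg K p - (ι K A + ι K B * X V16.a1)) * X V16.a1 + ι K B * qq K := by
            rw [hmul]
            simp only [map_mul, ι_X0, ι_X1, sg, aeval_X, sgfun, qq]
            ring
          rw [heq]
          exact Ideal.add_mem _ (Ideal.mul_mem_right _ _ h)
            (Ideal.mul_mem_left _ _ (Ideal.subset_span rfl))
      | b1 =>
          refine ⟨B * (X 0 * X 1), A, ?_⟩
          have heq : sg K (p * X V16.b1) - (ι K (B * (X 0 * X 1)) + ι K A * X V16.a1)
              = (sg K p - (ι K A + ι K B * X V16.a1)) * X V16.a1 + ι K B * qq K := by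
            rw [hmul]
            simp only [map_mul, ι_X0, ι_X1, sg, aeval_X, sgfun, qq]
            ring
          rw [heq]
          exact Ideal.add_mem _ (Ideal.mul_mem_right _ _ h)
            (Ideal.mul_mem_left _ _ (Ideal.subset_span rfl))
      | c1 =>
          refine ⟨B * (X 0 * X 1), A, ?_⟩
          have heq : sg K (p * X V16.c1) - (ι K (B * (X 0 * X 1)) + ι K A * X V16.a1)
              = (sg K p - (ι K A + ι K B * X V16.a1)) * X V16.a1 + ι K B * qq K := by
            rw [hmul]
            simp only [map_mul, ι_X0, ι_X1, sg, aeval_X, sgfun, qq]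
            ring
          rw [heq]
          exact Ideal.add_mem _ (Ideal.mul_mem_right _ _ h)
            (Ideal.mul_mem_left _ _ (Ideal.subset_span rfl))

/-! ### Parity argument -/

private lemma expand2_monomial (d : Fin 2 →₀ ℕ) (c : K) :
    expand 2 (monomial d c) = monomial (2 • d) c := by
  have hsupp : (2 • d).support = d.support := by
    ext i
    simp [Finsupp.mem_support_iff, Finsupp.smul_apply]
  have h1 : (monomial d c : MvPolynomial (Fin 2) K) = C c * ∏ x ∈ d.support, X x ^ d x := by
    rw [prod_X_pow_eq_monomial, C_mul_monomial, mul_one]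
  have h2 : (monomial (2 • d) c : MvPolynomial (Fin 2) K)
      = C c * ∏ x ∈ (2 • d).support, X x ^ (2 • d) x := by
    rw [prod_X_pow_eq_monomial, C_mul_monomial, mul_one]
  rw [h1, map_mul, expand_C, map_prod, h2, hsupp]
  congr 1
  refine Finset.prod_congr rfl fun i _ => ?_
  rw [map_pow, expand_X, ← pow_mul, Finsupp.smul_apply, smul_eq_mul]

private lemma smul2_inj {d d' : Fin 2 →₀ ℕ} (h : (2 : ℕ) • d = 2 • d') : d = d' := by
  ext i
  have := congrArg (fun f : Fin 2 →₀ ℕ => f i) h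
  simp only [Finsupp.smul_apply, smul_eq_mul] at this
  omega

private lemma coeff_expand2_even (A : MvPolynomial (Fin 2) K) (d : Fin 2 →₀ ℕ) :
    coeff (2 • d) (expand 2 A) = coeff d A := by
  conv_lhs => rw [A.as_sum, map_sum]
  rw [coeff_sum]
  have h1 : ∀ d' ∈ A.support,
      coeff (2 • d) (expand 2 (monomial d' (coeff d' A)))
        = if d' = d then coeff d' A else 0 := by
    intro d' _
    rw [expand2_monomial, coeff_monomial]
    congr 1
    simp only [eq_iff_iff]
    constructor
    · exact fun h => smul2_inj h
    · rintro rfl; rfl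
  rw [Finset.sum_congr rfl h1, Finset.sum_ite_eq' A.support d (fun d' => coeff d' A)]
  split_ifs with h
  · rfl
  · exact (MvPolynomial.notMem_support_iff.mp h).symm

private lemma coeff_expand2_odd (A : MvPolynomial (Fin 2) K) (m : Fin 2 →₀ ℕ)
    (hm : ¬ 2 ∣ m 0) : coeff m (expand 2 A) = 0 := by
  conv_lhs => rw [A.as_sum, map_sum]
  rw [coeff_sum]
  refine Finset.sum_eq_zero fun d' _ => ?_
  rw [expand2_monomial, coeff_monomial, if_neg]
  intro h
  apply hm
  have := congrArg (fun f : Fin 2 →₀ ℕ => f 0) h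
  simp only [Finsupp.smul_apply, smul_eq_mul] at this
  exact ⟨d' 0, this.symm⟩

private lemma coeff_mul_X0X1_even (B : MvPolynomial (Fin 2) K) (m : Fin 2 →₀ ℕ)
    (hm : 2 ∣ m 0) : coeff m (expand 2 B * X 0 * X 1) = 0 := by
  classical
  rw [coeff_mul_X']
  split_ifs with h1
  · rw [coeff_mul_X']
    split_ifs with h0
    · apply coeff_expand2_odd
      rw [Finsupp.mem_support_iff] at h0
      have e1 : (m - Finsupp.single 1 1 : Fin 2 →₀ ℕ) (0 : Fin 2) = m 0 := by
        rw [Finsupp.tsub_apply, Finsupp.single_eq_of_ne' (show (1 : Fin 2) ≠ 0 by decide)]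
        simp
      have e0 : (m - Finsupp.single 1 1 - Finsupp.single 0 1 : Fin 2 →₀ ℕ) (0 : Fin 2)
          = m 0 - 1 := by
        rw [Finsupp.tsub_apply, e1, Finsupp.single_eq_same]
      rw [e1] at h0
      rw [e0]
      omega
    · rfl
  · rfl

private lemma parity (A B : MvPolynomial (Fin 2) K)
    (h : expand 2 A + expand 2 B * (X 0 * X 1) = 0) : A = 0 ∧ B = 0 := by
  rw [← mul_assoc] at h
  have hA : A = 0 := by
    ext d
    have hdvd : 2 ∣ (2 • d) (0 : Fin 2) := ⟨d 0, by simp [Finsupp.smul_apply]⟩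
    have hc := congrArg (coeff (2 • d)) h
    rw [coeff_add, coeff_expand2_even, coeff_mul_X0X1_even K B _ hdvd, coeff_zero,
      add_zero] at hc
    simpa using hc
  refine ⟨hA, ?_⟩
  rw [hA, map_zero, zero_add] at h
  rcases mul_eq_zero.mp h with h' | h'
  · rcases mul_eq_zero.mp h' with h'' | h''
    · ext d
      have hcc := coeff_expand2_even K B d
      rw [h'', coeff_zero] at hcc
      simpa using hcc.symm
    · exact absurd h'' (X_ne_zero 0)
  · exact absurd h' (X_ne_zero 1)

/-! ### `P7` is the kernel of `φ7` -/

private lemma φ7_comp_sg : ∀ f, φ7 K (sg K f) = φ7 K f := by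
  intro f
  have : (φ7 K).comp (sg K) = φ7 K := by
    apply MvPolynomial.algHom_ext
    intro v
    cases v <;> simp [φ7, sg, sgfun, φfun]
  exact AlgHom.congr_fun this f

private lemma φ7_comp_ι : ∀ A, φ7 K (ι K A) = expand 2 A := by
  intro A
  have : (φ7 K).comp (ι K) = (expand 2 : MvPolynomial (Fin 2) K →ₐ[K] _) := by
    apply MvPolynomial.algHom_ext
    intro i
    fin_cases i <;> simp [φ7, ι, φfun, expand_X]
  exact AlgHom.congr_fun this A

private lemma φ7_qq : φ7 K (qq K) = 0 := by
  simp only [qq, map_sub, map_mul, φ7, aeval_X, φfun]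
  ring

private lemma P7_eq_ker : P7 K = RingHom.ker (φ7 K) := by
  apply le_antisymm
  · rw [P7, Ideal.span_le]
    intro x hx
    simp only [Set.mem_insert_iff, Set.mem_singleton_iff] at hx
    rcases hx with rfl | rfl | rfl | rfl
    · simp [RingHom.mem_ker, φ7, φfun]
    · simp [RingHom.mem_ker, φ7, φfun]
    · simp [RingHom.mem_ker, φ7, φfun]
    · exact φ7_qq K
  · intro f hf
    have hf0 : φ7 K f = 0 := hf
    have hsub : f - sg K f ∈ P7 K := by
      refine sub_aeval_mem K (P7 K) (sgfun K) (fun v => ?_) f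
      have hmem : ∀ g ∈ ({X V16.a1 - X V16.a2, X V16.a1 - X V16.b1,
          X V16.a1 - X V16.c1, qq K} : Set (MvPolynomial V16 K)), g ∈ P7 K :=
        fun g hg => Ideal.subset_span hg
      cases v with
      | s => simpa [sgfun] using (P7 K).zero_mem
      | a1 => simpa [sgfun] using (P7 K).zero_mem
      | t => simpa [sgfun] using (P7 K).zero_mem
      | a2 =>
          have : X V16.a2 - sgfun K V16.a2 = -(X V16.a1 - X V16.a2) := by
            simp [sgfun]
          rw [this]
          exact (P7 K).neg_mem (hmem _ (by simp))
      | b1 =>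
          have : X V16.b1 - sgfun K V16.b1 = -(X V16.a1 - X V16.b1) := by
            simp [sgfun]
          rw [this]
          exact (P7 K).neg_mem (hmem _ (by simp))
      | c1 =>
          have : X V16.c1 - sgfun K V16.c1 = -(X V16.a1 - X V16.c1) := by
            simp [sgfun]
          rw [this]
          exact (P7 K).neg_mem (hmem _ (by simp))
    obtain ⟨A, B, hAB⟩ := div_lemma K f
    rw [Ideal.mem_span_singleton'] at hAB
    obtain ⟨r, hr⟩ := hAB
    -- apply φ7
    have h0 : expand 2 A + expand 2 B * (X 0 * X 1) = 0 := by
      have := congrArg (φ7 K) hr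
      simp only [map_sub, map_add, map_mul, φ7_qq, mul_zero, φ7_comp_sg, φ7_comp_ι, hf0] at this
      have ha1 : φ7 K (X V16.a1) = X 0 * X 1 := by simp [φ7, φfun]
      rw [ha1] at this
      linear_combination this
    obtain ⟨hA, hB⟩ := parity K A B h0
    have hsg : sg K f ∈ P7 K := by
      rw [hA, hB] at hr
      have : sg K f = r * qq K := by
        rw [map_zero] at hr
        have := hr.symm
        simpa using this
      rw [this]
      exact Ideal.mul_mem_left _ _ (Ideal.subset_span (by simp [P7]))
    have := (P7 K).add_mem hsub hsg
    simpa using this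

private lemma P7_isPrime : (P7 K).IsPrime := by
  rw [P7_eq_ker]
  exact RingHom.ker_isPrime _

private lemma st_not_mem_P7 : X V16.s * X V16.t ∉ P7 K := by
  rw [P7_eq_ker, RingHom.mem_ker]
  intro h
  simp only [map_mul, φ7, aeval_X, φfun] at h
  have : (X 0 : MvPolynomial (Fin 2) K) ^ 2 * X 1 ^ 2 ≠ 0 :=
    mul_ne_zero (pow_ne_zero _ (X_ne_zero _)) (pow_ne_zero _ (X_ne_zero _))
  exact this h

/-! ### The squarefree monomial ideal `M` -/

private noncomputable def pp (v w : V16) : V16 →₀ ℕ := Finsupp.single v 1 + Finsupp.single w 1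

private def Eset : Set (V16 →₀ ℕ) :=
  {pp V16.a1 V16.b1, pp V16.a1 V16.c1, pp V16.a2 V16.b1, pp V16.a2 V16.c1,
   pp V16.b1 V16.c1, pp V16.s V16.t}

private noncomputable def M : Ideal (MvPolynomial V16 K) :=
  Ideal.span ((fun e => monomial e (1 : K)) '' Eset)

private lemma Xeq (v : V16) :
    (X v : MvPolynomial V16 K) = monomial (Finsupp.single v 1) 1 := by
  rw [← X_pow_eq_monomial, pow_one]

private lemma XX (v w : V16) :
    (X v * X w : MvPolynomial V16 K) = monomial (pp v w) 1 := by
  rw [Xeq, Xeq, monomial_mul, mul_one, pp]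

private lemma XXmem (v w : V16) (h : pp v w ∈ Eset) :
    (X v * X w : MvPolynomial V16 K) ∈ M K :=
  Ideal.subset_span ⟨pp v w, h, (XX K v w).symm⟩

private lemma pp_apply (v w u : V16) :
    pp v w u = (if v = u then 1 else 0) + (if w = u then 1 else 0) := by
  simp [pp, Finsupp.single_apply]

private lemma pp_fst_ne (v w : V16) : pp v w v ≠ 0 := by
  rw [pp_apply, if_pos rfl]
  split_ifs <;> omega

private lemma pp_snd_ne (v w : V16) : pp v w w ≠ 0 := by
  rw [pp_apply]
  rw [if_pos rfl]
  split_ifs <;> omega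

private lemma pp_le {m : V16 →₀ ℕ} {v w : V16} (hvw : v ≠ w)
    (h1 : m v ≠ 0) (h2 : m w ≠ 0) : pp v w ≤ m := by
  rw [Finsupp.le_iff]
  intro u _
  rw [pp_apply]
  by_cases hv : v = u
  · subst hv
    rw [if_pos rfl, if_neg (fun h => hvw h.symm)]
    omega
  · rw [if_neg hv]
    by_cases hw : w = u
    · subst hw
      rw [if_pos rfl]
      omega
    · rw [if_neg hw]
      omega

private lemma mono_mem_spanX (e : V16 →₀ ℕ) (s : Set V16) (i : V16) (hi : i ∈ s)
    (hne : e i ≠ 0) :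
    (monomial e (1 : K)) ∈ Ideal.span (X '' s : Set (MvPolynomial V16 K)) := by
  classical
  rw [mem_ideal_span_X_image]
  intro m hm
  rw [support_monomial, if_neg one_ne_zero, Finset.mem_singleton] at hm
  subst hm
  exact ⟨i, hi, hne⟩

private def s1 : Set V16 := {V16.s, V16.b1, V16.c1}
private def s2 : Set V16 := {V16.t, V16.b1, V16.c1}
private def s3 : Set V16 := {V16.s, V16.a1, V16.a2, V16.b1}
private def s4 : Set V16 := {V16.t, V16.a1, V16.a2, V16.b1}
private def s5 : Set V16 := {V16.s, V16.a1, V16.a2, V16.c1}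
private def s6 : Set V16 := {V16.t, V16.a1, V16.a2, V16.c1}

private lemma M_le (s : Set V16) (hs : ∀ e ∈ Eset, ∃ i ∈ s, e i ≠ 0) :
    M K ≤ Ideal.span (X '' s : Set (MvPolynomial V16 K)) := by
  rw [M, Ideal.span_le]
  rintro x ⟨e, he, rfl⟩
  obtain ⟨i, hi, hne⟩ := hs e he
  exact mono_mem_spanX K e s i hi hne

private lemma M_le_s1 : M K ≤ Ideal.span (X '' s1 : Set (MvPolynomial V16 K)) := by
  refine M_le K s1 fun e he => ?_
  simp only [Eset, Set.mem_insert_iff, Set.mem_singleton_iff] at he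
  rcases he with rfl | rfl | rfl | rfl | rfl | rfl
  · exact ⟨V16.b1, by simp [s1], pp_snd_ne _ _⟩
  · exact ⟨V16.c1, by simp [s1], pp_snd_ne _ _⟩
  · exact ⟨V16.b1, by simp [s1], pp_snd_ne _ _⟩
  · exact ⟨V16.c1, by simp [s1], pp_snd_ne _ _⟩
  · exact ⟨V16.b1, by simp [s1], pp_fst_ne _ _⟩
  · exact ⟨V16.s, by simp [s1], pp_fst_ne _ _⟩

private lemma M_le_s2 : M K ≤ Ideal.span (X '' s2 : Set (MvPolynomial V16 K)) := by
  refine M_le K s2 fun e he => ?_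
  simp only [Eset, Set.mem_insert_iff, Set.mem_singleton_iff] at he
  rcases he with rfl | rfl | rfl | rfl | rfl | rfl
  · exact ⟨V16.b1, by simp [s2], pp_snd_ne _ _⟩
  · exact ⟨V16.c1, by simp [s2], pp_snd_ne _ _⟩
  · exact ⟨V16.b1, by simp [s2], pp_snd_ne _ _⟩
  · exact ⟨V16.c1, by simp [s2], pp_snd_ne _ _⟩
  · exact ⟨V16.b1, by simp [s2], pp_fst_ne _ _⟩
  · exact ⟨V16.t, by simp [s2], pp_snd_ne _ _⟩

private lemma M_le_s3 : M K ≤ Ideal.span (X '' s3 : Set (MvPolynomial V16 K)) := by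
  refine M_le K s3 fun e he => ?_
  simp only [Eset, Set.mem_insert_iff, Set.mem_singleton_iff] at he
  rcases he with rfl | rfl | rfl | rfl | rfl | rfl
  · exact ⟨V16.a1, by simp [s3], pp_fst_ne _ _⟩
  · exact ⟨V16.a1, by simp [s3], pp_fst_ne _ _⟩
  · exact ⟨V16.a2, by simp [s3], pp_fst_ne _ _⟩
  · exact ⟨V16.a2, by simp [s3], pp_fst_ne _ _⟩
  · exact ⟨V16.b1, by simp [s3], pp_fst_ne _ _⟩
  · exact ⟨V16.s, by simp [s3], pp_fst_ne _ _⟩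

private lemma M_le_s4 : M K ≤ Ideal.span (X '' s4 : Set (MvPolynomial V16 K)) := by
  refine M_le K s4 fun e he => ?_
  simp only [Eset, Set.mem_insert_iff, Set.mem_singleton_iff] at he
  rcases he with rfl | rfl | rfl | rfl | rfl | rfl
  · exact ⟨V16.a1, by simp [s4], pp_fst_ne _ _⟩
  · exact ⟨V16.a1, by simp [s4], pp_fst_ne _ _⟩
  · exact ⟨V16.a2, by simp [s4], pp_fst_ne _ _⟩
  · exact ⟨V16.a2, by simp [s4], pp_fst_ne _ _⟩
  · exact ⟨V16.b1, by simp [s4], pp_fst_ne _ _⟩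
  · exact ⟨V16.t, by simp [s4], pp_snd_ne _ _⟩

private lemma M_le_s5 : M K ≤ Ideal.span (X '' s5 : Set (MvPolynomial V16 K)) := by
  refine M_le K s5 fun e he => ?_
  simp only [Eset, Set.mem_insert_iff, Set.mem_singleton_iff] at he
  rcases he with rfl | rfl | rfl | rfl | rfl | rfl
  · exact ⟨V16.a1, by simp [s5], pp_fst_ne _ _⟩
  · exact ⟨V16.a1, by simp [s5], pp_fst_ne _ _⟩
  · exact ⟨V16.a2, by simp [s5], pp_fst_ne _ _⟩
  · exact ⟨V16.a2, by simp [s5], pp_fst_ne _ _⟩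
  · exact ⟨V16.c1, by simp [s5], pp_snd_ne _ _⟩
  · exact ⟨V16.s, by simp [s5], pp_fst_ne _ _⟩

private lemma M_le_s6 : M K ≤ Ideal.span (X '' s6 : Set (MvPolynomial V16 K)) := by
  refine M_le K s6 fun e he => ?_
  simp only [Eset, Set.mem_insert_iff, Set.mem_singleton_iff] at he
  rcases he with rfl | rfl | rfl | rfl | rfl | rfl
  · exact ⟨V16.a1, by simp [s6], pp_fst_ne _ _⟩
  · exact ⟨V16.a1, by simp [s6], pp_fst_ne _ _⟩
  · exact ⟨V16.a2, by simp [s6], pp_fst_ne _ _⟩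
  · exact ⟨V16.a2, by simp [s6], pp_fst_ne _ _⟩
  · exact ⟨V16.c1, by simp [s6], pp_snd_ne _ _⟩
  · exact ⟨V16.t, by simp [s6], pp_snd_ne _ _⟩

private lemma mem_M_of (f : MvPolynomial V16 K)
    (h1 : f ∈ Ideal.span (X '' s1 : Set (MvPolynomial V16 K)))
    (h2 : f ∈ Ideal.span (X '' s2 : Set (MvPolynomial V16 K)))
    (h3 : f ∈ Ideal.span (X '' s3 : Set (MvPolynomial V16 K)))
    (h4 : f ∈ Ideal.span (X '' s4 : Set (MvPolynomial V16 K)))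
    (h5 : f ∈ Ideal.span (X '' s5 : Set (MvPolynomial V16 K)))
    (h6 : f ∈ Ideal.span (X '' s6 : Set (MvPolynomial V16 K))) :
    f ∈ M K := by
  rw [M, mem_ideal_span_monomial_image]
  intro m hm
  have c1 := mem_ideal_span_X_image.mp h1 m hm
  have c2 := mem_ideal_span_X_image.mp h2 m hm
  have c3 := mem_ideal_span_X_image.mp h3 m hm
  have c4 := mem_ideal_span_X_image.mp h4 m hm
  have c5 := mem_ideal_span_X_image.mp h5 m hm
  have c6 := mem_ideal_span_X_image.mp h6 m hm
  have d1 : m V16.s ≠ 0 ∨ m V16.b1 ≠ 0 ∨ m V16.c1 ≠ 0 := by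
    obtain ⟨i, hi, hv⟩ := c1
    simp only [s1, Set.mem_insert_iff, Set.mem_singleton_iff] at hi
    rcases hi with rfl | rfl | rfl
    · exact Or.inl hv
    · exact Or.inr (Or.inl hv)
    · exact Or.inr (Or.inr hv)
  have d2 : m V16.t ≠ 0 ∨ m V16.b1 ≠ 0 ∨ m V16.c1 ≠ 0 := by
    obtain ⟨i, hi, hv⟩ := c2
    simp only [s2, Set.mem_insert_iff, Set.mem_singleton_iff] at hi
    rcases hi with rfl | rfl | rfl
    · exact Or.inl hv
    · exact Or.inr (Or.inl hv)
    · exact Or.inr (Or.inr hv)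
  have d3 : m V16.s ≠ 0 ∨ m V16.a1 ≠ 0 ∨ m V16.a2 ≠ 0 ∨ m V16.b1 ≠ 0 := by
    obtain ⟨i, hi, hv⟩ := c3
    simp only [s3, Set.mem_insert_iff, Set.mem_singleton_iff] at hi
    rcases hi with rfl | rfl | rfl | rfl
    · exact Or.inl hv
    · exact Or.inr (Or.inl hv)
    · exact Or.inr (Or.inr (Or.inl hv))
    · exact Or.inr (Or.inr (Or.inr hv))
  have d4 : m V16.t ≠ 0 ∨ m V16.a1 ≠ 0 ∨ m V16.a2 ≠ 0 ∨ m V16.b1 ≠ 0 := by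
    obtain ⟨i, hi, hv⟩ := c4
    simp only [s4, Set.mem_insert_iff, Set.mem_singleton_iff] at hi
    rcases hi with rfl | rfl | rfl | rfl
    · exact Or.inl hv
    · exact Or.inr (Or.inl hv)
    · exact Or.inr (Or.inr (Or.inl hv))
    · exact Or.inr (Or.inr (Or.inr hv))
  have d5 : m V16.s ≠ 0 ∨ m V16.a1 ≠ 0 ∨ m V16.a2 ≠ 0 ∨ m V16.c1 ≠ 0 := by
    obtain ⟨i, hi, hv⟩ := c5
    simp only [s5, Set.mem_insert_iff, Set.mem_singleton_iff] at hi
    rcases hi with rfl | rfl | rfl | rfl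
    · exact Or.inl hv
    · exact Or.inr (Or.inl hv)
    · exact Or.inr (Or.inr (Or.inl hv))
    · exact Or.inr (Or.inr (Or.inr hv))
  have d6 : m V16.t ≠ 0 ∨ m V16.a1 ≠ 0 ∨ m V16.a2 ≠ 0 ∨ m V16.c1 ≠ 0 := by
    obtain ⟨i, hi, hv⟩ := c6
    simp only [s6, Set.mem_insert_iff, Set.mem_singleton_iff] at hi
    rcases hi with rfl | rfl | rfl | rfl
    · exact Or.inl hv
    · exact Or.inr (Or.inl hv)
    · exact Or.inr (Or.inr (Or.inl hv))
    · exact Or.inr (Or.inr (Or.inr hv))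
  have key : (m V16.a1 ≠ 0 ∧ m V16.b1 ≠ 0) ∨ (m V16.a1 ≠ 0 ∧ m V16.c1 ≠ 0)
      ∨ (m V16.a2 ≠ 0 ∧ m V16.b1 ≠ 0) ∨ (m V16.a2 ≠ 0 ∧ m V16.c1 ≠ 0)
      ∨ (m V16.b1 ≠ 0 ∧ m V16.c1 ≠ 0) ∨ (m V16.s ≠ 0 ∧ m V16.t ≠ 0) := by
    omega
  rcases key with h | h | h | h | h | h
  · exact ⟨pp V16.a1 V16.b1, by simp [Eset], pp_le (by simp) h.1 h.2⟩
  · exact ⟨pp V16.a1 V16.c1, by simp [Eset], pp_le (by simp) h.1 h.2⟩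
  · exact ⟨pp V16.a2 V16.b1, by simp [Eset], pp_le (by simp) h.1 h.2⟩
  · exact ⟨pp V16.a2 V16.c1, by simp [Eset], pp_le (by simp) h.1 h.2⟩
  · exact ⟨pp V16.b1 V16.c1, by simp [Eset], pp_le (by simp) h.1 h.2⟩
  · exact ⟨pp V16.s V16.t, by simp [Eset], pp_le (by simp) h.1 h.2⟩

private lemma M_isRadical : (M K).IsRadical := by
  have hle : M K ≤ Ideal.span (X '' s1 : Set (MvPolynomial V16 K))
      ⊓ (Ideal.span (X '' s2) ⊓ (Ideal.span (X '' s3) ⊓ (Ideal.span (X '' s4)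
      ⊓ (Ideal.span (X '' s5) ⊓ Ideal.span (X '' s6))))) :=
    le_inf (M_le_s1 K) (le_inf (M_le_s2 K) (le_inf (M_le_s3 K)
      (le_inf (M_le_s4 K) (le_inf (M_le_s5 K) (M_le_s6 K)))))
  have hge : Ideal.span (X '' s1 : Set (MvPolynomial V16 K))
      ⊓ (Ideal.span (X '' s2) ⊓ (Ideal.span (X '' s3) ⊓ (Ideal.span (X '' s4)
      ⊓ (Ideal.span (X '' s5) ⊓ Ideal.span (X '' s6))))) ≤ M K := by
    intro f hf
    simp only [Submodule.mem_inf] at hf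
    exact mem_M_of K f hf.1 hf.2.1 hf.2.2.1 hf.2.2.2.1 hf.2.2.2.2.1 hf.2.2.2.2.2
  rw [le_antisymm hle hge]
  exact ((spanX_isPrime K s1).isRadical).inf (((spanX_isPrime K s2).isRadical).inf
    (((spanX_isPrime K s3).isRadical).inf (((spanX_isPrime K s4).isRadical).inf
    (((spanX_isPrime K s5).isRadical).inf ((spanX_isPrime K s6).isRadical)))))

/-! ### The main ideal -/

private noncomputable def Igen : Ideal (MvPolynomial V16 K) :=
  Ideal.span
    ({X V16.a1 * X V16.b1 - X V16.s * X V16.t,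
      X V16.a1 * X V16.c1 - X V16.s * X V16.t,
      X V16.a2 * X V16.b1 - X V16.s * X V16.t,
      X V16.a2 * X V16.c1 - X V16.s * X V16.t,
      X V16.b1 * X V16.c1 - X V16.s * X V16.t} :
      Set (MvPolynomial V16 K))

private lemma Igen_isRadical : (Igen K).IsRadical := by
  have hsub : ∀ x ∈ ({X V16.a1 * X V16.b1 - X V16.s * X V16.t,
      X V16.a1 * X V16.c1 - X V16.s * X V16.t,
      X V16.a2 * X V16.b1 - X V16.s * X V16.t,
      X V16.a2 * X V16.c1 - X V16.s * X V16.t,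
      X V16.b1 * X V16.c1 - X V16.s * X V16.t} : Set (MvPolynomial V16 K)),
      x ∈ Igen K := fun x hx => Ideal.subset_span hx
  have hP7sub : ∀ x ∈ ({X V16.a1 - X V16.a2, X V16.a1 - X V16.b1,
      X V16.a1 - X V16.c1, qq K} : Set (MvPolynomial V16 K)),
      x ∈ P7 K := fun x hx => Ideal.subset_span hx
  -- I ≤ M
  have hIM : Igen K ≤ M K := by
    rw [Igen, Ideal.span_le]
    intro x hx
    simp only [Set.mem_insert_iff, Set.mem_singleton_iff] at hx
    rcases hx with rfl | rfl | rfl | rfl | rfl <;>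
      exact sub_mem (XXmem K _ _ (by simp [Eset])) (XXmem K _ _ (by simp [Eset]))
  -- I ≤ P7
  have hIP7 : Igen K ≤ P7 K := by
    rw [Igen, Ideal.span_le]
    intro x hx
    simp only [Set.mem_insert_iff, Set.mem_singleton_iff] at hx
    rcases hx with rfl | rfl | rfl | rfl | rfl
    · have e : X V16.a1 * X V16.b1 - X V16.s * X V16.t
          = (-(X V16.a1)) * (X V16.a1 - X V16.b1) + qq K := by rw [qq]; ring
      rw [e]
      exact add_mem (Ideal.mul_mem_left _ _ (hP7sub _ (by simp))) (hP7sub _ (by simp))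
    · have e : X V16.a1 * X V16.c1 - X V16.s * X V16.t
          = (-(X V16.a1)) * (X V16.a1 - X V16.c1) + qq K := by rw [qq]; ring
      rw [e]
      exact add_mem (Ideal.mul_mem_left _ _ (hP7sub _ (by simp))) (hP7sub _ (by simp))
    · have e : X V16.a2 * X V16.b1 - X V16.s * X V16.t
          = (-(X V16.b1)) * (X V16.a1 - X V16.a2)
            + ((-(X V16.a1)) * (X V16.a1 - X V16.b1) + qq K) := by rw [qq]; ring
      rw [e]
      exact add_mem (Ideal.mul_mem_left _ _ (hP7sub _ (by simp)))
        (add_mem (Ideal.mul_mem_left _ _ (hP7sub _ (by simp))) (hP7sub _ (by simp)))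
    · have e : X V16.a2 * X V16.c1 - X V16.s * X V16.t
          = (-(X V16.c1)) * (X V16.a1 - X V16.a2)
            + ((-(X V16.a1)) * (X V16.a1 - X V16.c1) + qq K) := by rw [qq]; ring
      rw [e]
      exact add_mem (Ideal.mul_mem_left _ _ (hP7sub _ (by simp)))
        (add_mem (Ideal.mul_mem_left _ _ (hP7sub _ (by simp))) (hP7sub _ (by simp)))
    · have e : X V16.b1 * X V16.c1 - X V16.s * X V16.t
          = (-(X V16.c1)) * (X V16.a1 - X V16.b1)
            + ((-(X V16.a1)) * (X V16.a1 - X V16.c1) + qq K) := by rw [qq]; ring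
      rw [e]
      exact add_mem (Ideal.mul_mem_left _ _ (hP7sub _ (by simp)))
        (add_mem (Ideal.mul_mem_left _ _ (hP7sub _ (by simp))) (hP7sub _ (by simp)))
  -- M ≤ I ⊔ (st)
  have hMsup : M K ≤ Igen K ⊔ Ideal.span {X V16.s * X V16.t} := by
    rw [M, Ideal.span_le]
    rintro x ⟨e, he, rfl⟩
    simp only [Eset, Set.mem_insert_iff, Set.mem_singleton_iff] at he
    rw [SetLike.mem_coe]
    beta_reduce
    have hst : (X V16.s * X V16.t : MvPolynomial V16 K)
        ∈ Igen K ⊔ Ideal.span {X V16.s * X V16.t} :=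
      Ideal.mem_sup_right (Ideal.subset_span rfl)
    rcases he with rfl | rfl | rfl | rfl | rfl | rfl
    · rw [← XX]
      have e : (X V16.a1 * X V16.b1 : MvPolynomial V16 K)
          = (X V16.a1 * X V16.b1 - X V16.s * X V16.t) + X V16.s * X V16.t := by ring
      rw [e]
      exact add_mem (Ideal.mem_sup_left (hsub _ (by simp))) hst
    · rw [← XX]
      have e : (X V16.a1 * X V16.c1 : MvPolynomial V16 K)
          = (X V16.a1 * X V16.c1 - X V16.s * X V16.t) + X V16.s * X V16.t := by ring
      rw [e]
      exact add_mem (Ideal.mem_sup_left (hsub _ (by simp))) hst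
    · rw [← XX]
      have e : (X V16.a2 * X V16.b1 : MvPolynomial V16 K)
          = (X V16.a2 * X V16.b1 - X V16.s * X V16.t) + X V16.s * X V16.t := by ring
      rw [e]
      exact add_mem (Ideal.mem_sup_left (hsub _ (by simp))) hst
    · rw [← XX]
      have e : (X V16.a2 * X V16.c1 : MvPolynomial V16 K)
          = (X V16.a2 * X V16.c1 - X V16.s * X V16.t) + X V16.s * X V16.t := by ring
      rw [e]
      exact add_mem (Ideal.mem_sup_left (hsub _ (by simp))) hst
    · rw [← XX]
      have e : (X V16.b1 * X V16.c1 : MvPolynomial V16 K)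
          = (X V16.b1 * X V16.c1 - X V16.s * X V16.t) + X V16.s * X V16.t := by ring
      rw [e]
      exact add_mem (Ideal.mem_sup_left (hsub _ (by simp))) hst
    · rw [← XX]
      exact hst
  -- st · P7 ⊆ I
  have hcolon : P7 K ≤ (Igen K).colon ((Ideal.span {X V16.s * X V16.t} : Ideal (MvPolynomial V16 K)) : Set (MvPolynomial V16 K)) := by
    rw [P7, Ideal.span_le]
    intro x hx
    simp only [Set.mem_insert_iff, Set.mem_singleton_iff] at hx
    rw [SetLike.mem_coe, Ideal.mem_colon_span_singleton]
    rcases hx with rfl | rfl | rfl | rfl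
    · have e : (X V16.a1 - X V16.a2) * (X V16.s * X V16.t : MvPolynomial V16 K)
          = X V16.a2 * (X V16.a1 * X V16.c1 - X V16.s * X V16.t)
            + (-(X V16.a1)) * (X V16.a2 * X V16.c1 - X V16.s * X V16.t) := by ring
      rw [e]
      exact add_mem (Ideal.mul_mem_left _ _ (hsub _ (by simp)))
        (Ideal.mul_mem_left _ _ (hsub _ (by simp)))
    · have e : (X V16.a1 - X V16.b1) * (X V16.s * X V16.t : MvPolynomial V16 K)
          = X V16.b1 * (X V16.a1 * X V16.c1 - X V16.s * X V16.t)
            + (-(X V16.a1)) * (X V16.b1 * X V16.c1 - X V16.s * X V16.t) := by ring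
      rw [e]
      exact add_mem (Ideal.mul_mem_left _ _ (hsub _ (by simp)))
        (Ideal.mul_mem_left _ _ (hsub _ (by simp)))
    · have e : (X V16.a1 - X V16.c1) * (X V16.s * X V16.t : MvPolynomial V16 K)
          = X V16.c1 * (X V16.a1 * X V16.b1 - X V16.s * X V16.t)
            + (-(X V16.a1)) * (X V16.b1 * X V16.c1 - X V16.s * X V16.t) := by ring
      rw [e]
      exact add_mem (Ideal.mul_mem_left _ _ (hsub _ (by simp)))
        (Ideal.mul_mem_left _ _ (hsub _ (by simp)))
    · have e : qq K * (X V16.s * X V16.t)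
          = (X V16.a1 * X V16.b1) * (X V16.a1 * X V16.c1 - X V16.s * X V16.t)
            + ((-(X V16.a1 * X V16.a1)) * (X V16.b1 * X V16.c1 - X V16.s * X V16.t)
            + (X V16.s * X V16.t) * (X V16.a1 * X V16.b1 - X V16.s * X V16.t)) := by
        rw [qq]; ring
      rw [e]
      exact add_mem (Ideal.mul_mem_left _ _ (hsub _ (by simp)))
        (add_mem (Ideal.mul_mem_left _ _ (hsub _ (by simp)))
          (Ideal.mul_mem_left _ _ (hsub _ (by simp))))
  -- M ⊓ P7 ≤ I
  have hMP : M K ⊓ P7 K ≤ Igen K := by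
    intro x hx
    rw [Submodule.mem_inf] at hx
    obtain ⟨hxM, hxP⟩ := hx
    have hx2 := hMsup hxM
    rw [Submodule.mem_sup] at hx2
    obtain ⟨i, hi, y, hy, rfl⟩ := hx2
    rw [Ideal.mem_span_singleton'] at hy
    obtain ⟨r, rfl⟩ := hy
    have hyP : r * (X V16.s * X V16.t) ∈ P7 K := by
      have e : r * (X V16.s * X V16.t)
          = (i + r * (X V16.s * X V16.t)) - i := by ring
      rw [e]
      exact sub_mem hxP (hIP7 hi)
    have hrP : r ∈ P7 K :=
      ((P7_isPrime K).mem_or_mem hyP).resolve_right (st_not_mem_P7 K)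
    exact add_mem hi (Ideal.mem_colon_span_singleton.mp (hcolon hrP))
  have hEq : Igen K = M K ⊓ P7 K := le_antisymm (le_inf hIM hIP7) hMP
  rw [hEq]
  exact (M_isRadical K).inf ((P7_isPrime K).isRadical)

end L3Aux

/-- the join-meet ideal of the lattice `L₃(2,1,1)`, generated by
`{a_1 b_1 − st, a_1 c_1 − st, a_2 b_1 − st, a_2 c_1 − st, b_1 c_1 − st}`, is radical. -/
theorem joinMeetIdeal_L3_211_isRadical (K : Type*) [Field K] :
    (Ideal.span
      ({X V16.a1 * X V16.b1 - X V16.s * X V16.t,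
        X V16.a1 * X V16.c1 - X V16.s * X V16.t,
        X V16.a2 * X V16.b1 - X V16.s * X V16.t,
        X V16.a2 * X V16.c1 - X V16.s * X V16.t,
        X V16.b1 * X V16.c1 - X V16.s * X V16.t} :
        Set (MvPolynomial V16 K))).IsRadical :=
  L3Aux.Igen_isRadical K
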